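/- Suppose σ and σ̃ are k-simplices in ℝ^m with corresponding vertices satisfying |‖pᵢ − pⱼ‖ − ‖p̃ᵢ − p̃ⱼ‖| ≤ ξ₀·L(σ) for all i < j. If ξ₀ ≤ (t(σ)/4)², then the circumradii satisfy |R(σ̃) − R(σ)| ≤ 16·k^{3/2}·R(σ)·ξ₀/t(σ)³. -/

import Mathlib

open Matrix Metric
open scoped Classical BigOperators
local notation "⟪" x ", " y "⟫" => @inner ℝ _ _ x y

noncomputable section

/-- Euclidean space ℝ^m. -/
abbrev E (m : ℕ) := EuclideanSpace ℝ (Fin m)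

/-- Euclidean norm of a plain vector. -/
noncomputable def euclNorm {n : ℕ} (v : Fin n → ℝ) : ℝ := Real.sqrt (∑ i, v i ^ 2)

/-- Largest singular value (operator norm) of a matrix. -/
noncomputable def largeSV {m k : ℕ} (P : Matrix (Fin m) (Fin k) ℝ) : ℝ :=
  ⨆ x : {x : Fin k → ℝ // euclNorm x = 1}, euclNorm (P.mulVec x)

/-- Smallest singular value of a matrix. -/
noncomputable def smallSV {m k : ℕ} (P : Matrix (Fin m) (Fin k) ℝ) : ℝ :=
  ⨅ x : {x : Fin k → ℝ // euclNorm x = 1}, euclNorm (P.mulVec x)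

/-- Matrix of edge vectors pᵢ − p₀ of a k-simplex. -/
noncomputable def vertMatrix {m k : ℕ} (p : Fin (k+1) → E m) : Matrix (Fin m) (Fin k) ℝ :=
  fun a j => p j.succ a - p 0 a

/-- Pseudo-inverse (PᵀP)⁻¹Pᵀ of a matrix of full column rank. -/
noncomputable def pseudoInv {m k : ℕ} (P : Matrix (Fin m) (Fin k) ℝ) :
    Matrix (Fin k) (Fin m) ℝ := (Pᵀ * P)⁻¹ * Pᵀ

/-- Longest edge length of a simplex given by its vertices. -/
noncomputable def longEdge {m k : ℕ} (p : Fin (k+1) → E m) : ℝ :=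
  ⨆ i, ⨆ j, dist (p i) (p j)

/-- Altitude of vertex i: distance to affine hull of the opposite facet. -/
noncomputable def altitude {m k : ℕ} (p : Fin (k+1) → E m) (i : Fin (k+1)) : ℝ :=
  Metric.infDist (p i) (↑(affineSpan ℝ (p '' {j | j ≠ i})) : Set (E m))

/-- Thickness of a k-simplex: 1 if k = 0, else min altitude / (k · longest edge). -/
noncomputable def thickness {m k : ℕ} (p : Fin (k+1) → E m) : ℝ :=
  if k = 0 then 1 else (⨅ i, altitude p i) / (k * longEdge p)

/-- Longest edge of a finite vertex set. -/
noncomputable def fLongEdge {m : ℕ} (s : Finset (E m)) : ℝ := Metric.diam (s : Set (E m))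

/-- Minimal altitude of a finite vertex set. -/
noncomputable def fMinAlt {m : ℕ} (s : Finset (E m)) : ℝ :=
  ⨅ p : {p // p ∈ s},
    Metric.infDist (p : E m) (↑(affineSpan ℝ ((s.erase (p : E m)) : Set (E m))) : Set (E m))

/-- Thickness of a simplex given as a finite vertex set. -/
noncomputable def fThickness {m : ℕ} (s : Finset (E m)) : ℝ :=
  if s.card ≤ 1 then 1 else fMinAlt s / ((s.card - 1 : ℕ) * fLongEdge s)

/-- A simplex (finite vertex set) is Γ₀-good if every j-face has thickness ≥ Γ₀^j. -/
def isGood {m : ℕ} (Γ₀ : ℝ) (s : Finset (E m)) : Prop :=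
  ∀ t ⊆ s, t.Nonempty → fThickness t ≥ Γ₀ ^ (t.card - 1)

/-- A Γ₀-flake: not Γ₀-good, but every facet is Γ₀-good. -/
def isFlake {m : ℕ} (Γ₀ : ℝ) (s : Finset (E m)) : Prop :=
  ¬ isGood Γ₀ s ∧ ∀ p ∈ s, isGood Γ₀ (s.erase p)

lemma span_coords {m k : ℕ} (p : Fin (k+1) → E m) (c : E m)
    (hc : c ∈ (↑(affineSpan ℝ (Set.range p)) : Set (E m))) :
    ∃ a : Fin k → ℝ, c - p 0 = ∑ j, a j • (p j.succ - p 0) := by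
  have h0 : p 0 ∈ affineSpan ℝ (Set.range p) := mem_affineSpan ℝ (Set.mem_range_self 0)
  have hd : c -ᵥ p 0 ∈ vectorSpan ℝ (Set.range p) := by
    have := AffineSubspace.vsub_mem_direction (hc : c ∈ affineSpan ℝ (Set.range p)) h0
    rwa [direction_affineSpan] at this
  rw [vectorSpan_range_eq_span_range_vsub_right ℝ p 0, Submodule.mem_span_range_iff_exists_fun] at hd
  obtain ⟨a, ha⟩ := hd
  refine ⟨fun j => a j.succ, ?_⟩
  have : c - p 0 = ∑ i : Fin (k+1), a i • (p i -ᵥ p 0) := ha.symm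
  rw [this, Fin.sum_univ_succ]
  simp [vsub_eq_sub]

lemma alt_le {m k : ℕ} (p : Fin (k+1) → E m) (a : Fin k → ℝ) (i : Fin k) :
    |a i| * altitude p i.succ ≤ ‖∑ j, a j • (p j.succ - p 0)‖ := by
  rcases eq_or_ne (a i) 0 with h0 | h0
  · simp [h0]
  set s := ∑ j, a j • (p j.succ - p 0) with hs
  set S := affineSpan ℝ (p '' {j | j ≠ i.succ}) with hS
  have hp0 : p 0 ∈ S := mem_affineSpan ℝ ⟨0, by simp [Ne.symm (Fin.succ_ne_zero i)], rfl⟩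
  set u : E m := -((a i)⁻¹ • (∑ j ∈ Finset.univ.erase i, a j • (p j.succ - p 0))) with hu
  have hudir : u ∈ S.direction := by
    rw [hS, direction_affineSpan]
    refine Submodule.neg_mem _ (Submodule.smul_mem _ _ (Submodule.sum_mem _ ?_))
    intro j hj
    refine Submodule.smul_mem _ _ ?_
    have hj' : j ≠ i := Finset.ne_of_mem_erase hj
    have h1 : p j.succ ∈ p '' {l | l ≠ i.succ} :=
      ⟨j.succ, by simpa using fun h => hj' (Fin.succ_inj.mp h), rfl⟩
    have h2 : p 0 ∈ p '' {l | l ≠ i.succ} := ⟨0, by simp [Ne.symm (Fin.succ_ne_zero i)], rfl⟩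
    exact vsub_mem_vectorSpan ℝ h1 h2
  have hz : u +ᵥ p 0 ∈ S := AffineSubspace.vadd_mem_of_mem_direction hudir hp0
  have hd : altitude p i.succ ≤ dist (p i.succ) (u +ᵥ p 0) := Metric.infDist_le_dist_of_mem hz
  have hsplit : s = a i • (p i.succ - p 0) + ∑ j ∈ Finset.univ.erase i, a j • (p j.succ - p 0) :=
    (Finset.add_sum_erase _ _ (Finset.mem_univ i)).symm
  have hkey : p i.succ - (u +ᵥ p 0) = (a i)⁻¹ • s := by
    rw [hsplit, smul_add, smul_smul, inv_mul_cancel₀ h0, one_smul]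
    simp only [hu, vadd_eq_add]
    abel
  have hdist : dist (p i.succ) (u +ᵥ p 0) = ‖s‖ / |a i| := by
    rw [dist_eq_norm, hkey, norm_smul, norm_inv, Real.norm_eq_abs, div_eq_inv_mul]
  have := mul_le_mul_of_nonneg_left hd (abs_nonneg (a i))
  rw [hdist, mul_div_cancel₀ _ (abs_ne_zero.mpr h0)] at this
  exact this

lemma circum_setup {m k : ℕ} (p : Fin (k+1) → E m) (c : E m) (R : ℝ)
    (hc : c ∈ (↑(affineSpan ℝ (Set.range p)) : Set (E m)))
    (hR : ∀ i, dist c (p i) = R) :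
    ∃ a : Fin k → ℝ,
      c - p 0 = ∑ j, a j • (p j.succ - p 0) ∧
      (∀ i : Fin k, ∑ j, a j * ⟪p i.succ - p 0, p j.succ - p 0⟫ = ‖p i.succ - p 0‖^2 / 2) ∧
      R^2 = (∑ j, a j * ‖p j.succ - p 0‖^2) / 2 := by
  obtain ⟨a, ha⟩ := span_coords p c hc
  set v : Fin k → E m := fun j => p j.succ - p 0 with hv
  have hinner : ∀ i : Fin k, ⟪c - p 0, v i⟫ = ‖v i‖^2 / 2 := by
    intro i
    have h1 : ‖c - p i.succ‖ = R := by rw [← dist_eq_norm]; exact hR i.succ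
    have h0 : ‖c - p 0‖ = R := by rw [← dist_eq_norm]; exact hR 0
    have hx : c - p i.succ = (c - p 0) - v i := by simp only [hv]; abel
    have := norm_sub_sq_real (c - p 0) (v i)
    rw [← hx, h1, h0] at this
    linarith
  have hsum : ∀ i : Fin k, ⟪c - p 0, v i⟫ = ∑ j, a j * ⟪v i, v j⟫ := by
    intro i
    rw [ha, sum_inner]
    refine Finset.sum_congr rfl fun j _ => ?_
    rw [real_inner_smul_left, real_inner_comm]
  refine ⟨a, ha, fun i => by rw [← hsum, hinner], ?_⟩
  have hRR : R^2 = ⟪c - p 0, c - p 0⟫ := by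
    rw [real_inner_self_eq_norm_sq, ← dist_eq_norm, hR 0]
  rw [hRR]
  nth_rewrite 2 [ha]
  rw [inner_sum, Finset.sum_div]
  refine Finset.sum_congr rfl fun j _ => ?_
  rw [real_inner_smul_right, hinner j, mul_div_assoc]


set_option maxHeartbeats 1000000 in
/-- Circumradii under distortion. -/
theorem stmt7 {m k : ℕ} (p q : Fin (k+1) → E m) (ξ₀ : ℝ)
    (hξ0 : 0 ≤ ξ₀) (hξ : ξ₀ ≤ (thickness p / 4) ^ 2)
    (h : ∀ i j : Fin (k+1), i < j →
      |dist (p i) (p j) - dist (q i) (q j)| ≤ ξ₀ * longEdge p)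
    (c c' : E m) (R R' : ℝ)
    (hc : c ∈ (↑(affineSpan ℝ (Set.range p)) : Set (E m)))
    (hR : ∀ i, dist c (p i) = R)
    (hc' : c' ∈ (↑(affineSpan ℝ (Set.range q)) : Set (E m)))
    (hR' : ∀ i, dist c' (q i) = R') :
    |R' - R| ≤ 16 * Real.sqrt ((k : ℝ) ^ 3) * R * ξ₀ / thickness p ^ 3 := by
  have hR0 : 0 ≤ R := (hR 0) ▸ dist_nonneg
  have hR'0 : 0 ≤ R' := (hR' 0) ▸ dist_nonneg
  set t := thickness p with htdef
  set L := longEdge p with hLdef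
  -- basic facts about L
  have hbddA : ∀ i : Fin (k+1), BddAbove (Set.range fun j => dist (p i) (p j)) :=
    fun i => (Set.finite_range _).bddAbove
  have hbddB : BddAbove (Set.range fun i => ⨆ j, dist (p i) (p j)) :=
    (Set.finite_range _).bddAbove
  have hLd : ∀ α β, dist (p α) (p β) ≤ L :=
    fun α β => le_trans (le_ciSup (hbddA α) β) (le_ciSup hbddB α)
  have hL0 : 0 ≤ L := le_trans (by simp) (hLd 0 0)
  have hL2R : L ≤ 2 * R := by
    refine ciSup_le fun i => ciSup_le fun j => ?_
    calc dist (p i) (p j) ≤ dist (p i) c + dist c (p j) := dist_triangle _ _ _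
      _ = 2 * R := by rw [dist_comm (p i) c, hR i, hR j]; ring
  have ht0 : 0 ≤ t := by
    rw [htdef, thickness]
    split
    · norm_num
    · exact div_nonneg (Real.iInf_nonneg fun i => Metric.infDist_nonneg)
        (mul_nonneg (Nat.cast_nonneg _) hL0)
  -- setups
  obtain ⟨lam, hlam, hlamEq, hlamR⟩ := circum_setup p c R hc hR
  obtain ⟨mu, hmu, hmuEq, hmuR⟩ := circum_setup q c' R' hc' hR'
  -- distance distortion
  have hq : ∀ α β, |dist (p α) (p β) - dist (q α) (q β)| ≤ ξ₀ * L := by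
    intro α β
    rcases lt_trichotomy α β with hlt | heq | hgt
    · exact h α β hlt
    · subst heq; simpa using mul_nonneg hξ0 hL0
    · rw [dist_comm (p α), dist_comm (q α)]; exact h β α hgt
  set D := ξ₀ * L * (2*L + ξ₀*L) with hD
  have hD0 : 0 ≤ D :=
    mul_nonneg (mul_nonneg hξ0 hL0) (by nlinarith [mul_nonneg hξ0 hL0])
  have hsq : ∀ α β, |dist (p α) (p β)^2 - dist (q α) (q β)^2| ≤ D := by
    intro α β
    have h1 := hq α β
    have h2 := hLd α β
    have h3 : (0:ℝ) ≤ dist (q α) (q β) := dist_nonneg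
    have h4 : (0:ℝ) ≤ dist (p α) (p β) := dist_nonneg
    have h5 : 0 ≤ ξ₀ * L := mul_nonneg hξ0 hL0
    rw [abs_le] at h1 ⊢
    constructor <;> nlinarith
  -- Gram comparison
  have hnormv : ∀ α β : Fin (k+1), ‖p α - p β‖ = dist (p α) (p β) := fun α β => (dist_eq_norm _ _).symm
  have hnormw : ∀ α β : Fin (k+1), ‖q α - q β‖ = dist (q α) (q β) := fun α β => (dist_eq_norm _ _).symm
  have hgram : ∀ i j : Fin k,
      |⟪p i.succ - p 0, p j.succ - p 0⟫ - ⟪q i.succ - q 0, q j.succ - q 0⟫| ≤ 3/2 * D := by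
    intro i j
    have e1 : ⟪p i.succ - p 0, p j.succ - p 0⟫ =
        (dist (p i.succ) (p 0)^2 + dist (p j.succ) (p 0)^2 - dist (p i.succ) (p j.succ)^2)/2 := by
      have hxy : (p i.succ - p 0) - (p j.succ - p 0) = p i.succ - p j.succ := by abel
      have hns := norm_sub_sq_real (p i.succ - p 0) (p j.succ - p 0)
      rw [hxy] at hns
      rw [← hnormv, ← hnormv, ← hnormv]
      linarith
    have e2 : ⟪q i.succ - q 0, q j.succ - q 0⟫ =
        (dist (q i.succ) (q 0)^2 + dist (q j.succ) (q 0)^2 - dist (q i.succ) (q j.succ)^2)/2 := by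
      have hxy : (q i.succ - q 0) - (q j.succ - q 0) = q i.succ - q j.succ := by abel
      have hns := norm_sub_sq_real (q i.succ - q 0) (q j.succ - q 0)
      rw [hxy] at hns
      rw [← hnormw, ← hnormw, ← hnormw]
      linarith
    rw [e1, e2]
    have a1 := hsq i.succ 0
    have a2 := hsq j.succ 0
    have a3 := hsq i.succ j.succ
    rw [abs_le] at a1 a2 a3 ⊢
    constructor <;> [linarith; linarith]
  have hbdiff : ∀ i : Fin k, |‖p i.succ - p 0‖^2 - ‖q i.succ - q 0‖^2| ≤ 3/2 * D := by
    intro i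
    have := hgram i i
    rwa [real_inner_self_eq_norm_sq, real_inner_self_eq_norm_sq] at this
  have hRHS0 : 0 ≤ 16 * Real.sqrt ((k : ℝ) ^ 3) * R * ξ₀ / t ^ 3 :=
    div_nonneg (mul_nonneg (mul_nonneg (mul_nonneg (by norm_num) (Real.sqrt_nonneg _)) hR0) hξ0)
      (pow_nonneg ht0 3)
  by_cases hcase : ξ₀ * L = 0
  · -- exact case : all distances agree, R' = R
    have hqd : ∀ α β, dist (q α) (q β) = dist (p α) (p β) := by
      intro α β
      have h1 := hq α β
      rw [hcase] at h1
      have := abs_nonneg (dist (p α) (p β) - dist (q α) (q β))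
      have h2 : |dist (p α) (p β) - dist (q α) (q β)| = 0 := le_antisymm h1 this
      rw [abs_eq_zero] at h2
      linarith
    have hDz : D = 0 := by rw [hD, hcase, zero_mul]
    have hGeq : ∀ i j : Fin k,
        ⟪q i.succ - q 0, q j.succ - q 0⟫ = ⟪p i.succ - p 0, p j.succ - p 0⟫ := by
      intro i j
      have := hgram i j
      rw [hDz] at this
      have h2 := abs_nonneg (⟪p i.succ - p 0, p j.succ - p 0⟫ - ⟪q i.succ - q 0, q j.succ - q 0⟫)
      have h3 : |⟪p i.succ - p 0, p j.succ - p 0⟫ - ⟪q i.succ - q 0, q j.succ - q 0⟫| = 0 := by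
        apply le_antisymm _ h2; linarith
      rw [abs_eq_zero] at h3
      linarith
    have hbeq : ∀ i : Fin k, ‖q i.succ - q 0‖^2 = ‖p i.succ - p 0‖^2 := by
      intro i
      have := hGeq i i
      rwa [real_inner_self_eq_norm_sq, real_inner_self_eq_norm_sq] at this
    have key : ∀ i : Fin k, ∑ j, (mu j - lam j) * ⟪p i.succ - p 0, p j.succ - p 0⟫ = 0 := by
      intro i
      have h1 : ∑ j, mu j * ⟪p i.succ - p 0, p j.succ - p 0⟫ = ‖p i.succ - p 0‖^2/2 := by
        rw [← hbeq i, ← hmuEq i]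
        exact Finset.sum_congr rfl fun j _ => by rw [hGeq i j]
      have h2 := hlamEq i
      rw [show (fun j => (mu j - lam j) * ⟪p i.succ - p 0, p j.succ - p 0⟫) =
        (fun j => mu j * ⟪p i.succ - p 0, p j.succ - p 0⟫ -
          lam j * ⟪p i.succ - p 0, p j.succ - p 0⟫) from funext fun j => by ring]
      rw [Finset.sum_sub_distrib, h1, h2]
      ring
    have hRR' : R'^2 = R^2 := by
      have e1 : R'^2 - R^2 = ∑ j, (mu j - lam j) * (‖p j.succ - p 0‖^2/2) := by
        rw [hmuR, hlamR]
        rw [show (∑ j, mu j * ‖q j.succ - q 0‖^2) = ∑ j, mu j * ‖p j.succ - p 0‖^2 from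
          Finset.sum_congr rfl fun j _ => by rw [hbeq j]]
        rw [div_sub_div_same, ← Finset.sum_sub_distrib, Finset.sum_div]
        exact Finset.sum_congr rfl fun j _ => by ring
      have e2 : ∑ j, (mu j - lam j) * (‖p j.succ - p 0‖^2/2) =
          ∑ j, (mu j - lam j) * (∑ i, lam i * ⟪p j.succ - p 0, p i.succ - p 0⟫) :=
        Finset.sum_congr rfl fun j _ => by rw [hlamEq j]
      have e3 : ∑ j, (mu j - lam j) * (∑ i, lam i * ⟪p j.succ - p 0, p i.succ - p 0⟫) = 0 := by
        have swap : ∀ j : Fin k, (mu j - lam j) * (∑ i, lam i * ⟪p j.succ - p 0, p i.succ - p 0⟫)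
            = ∑ i, lam i * ((mu j - lam j) * ⟪p i.succ - p 0, p j.succ - p 0⟫) := by
          intro j
          rw [Finset.mul_sum]
          refine Finset.sum_congr rfl fun i _ => ?_
          rw [real_inner_comm (p i.succ - p 0) (p j.succ - p 0)]
          ring
        rw [Finset.sum_congr rfl fun j _ => swap j, Finset.sum_comm]
        refine Finset.sum_eq_zero fun i _ => ?_
        rw [← Finset.mul_sum, key i, mul_zero]
      linarith [e1, e2, e3]
    have : R' = R := by
      have := Real.sqrt_sq hR'0
      rw [hRR', Real.sqrt_sq hR0] at this
      exact this.symm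
    rw [this]
    simpa using hRHS0
  · -- main case
    have hξpos : 0 < ξ₀ := lt_of_le_of_ne hξ0 (fun hh => hcase (by rw [← hh, zero_mul]))
    have hLpos : 0 < L := lt_of_le_of_ne hL0 (fun hh => hcase (by rw [← hh, mul_zero]))
    have hk : k ≠ 0 := by
      rintro rfl
      have hle : L ≤ 0 := by
        rw [hLdef, longEdge]
        refine ciSup_le fun i => ciSup_le fun j => ?_
        have hi : i = j := by omega
        rw [hi, dist_self]
      exact hLpos.ne' (le_antisymm hle hL0)
    have hk1 : (1:ℝ) ≤ (k:ℝ) := by exact_mod_cast Nat.one_le_iff_ne_zero.mpr hk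
    have ht : 0 < t := by
      rcases ht0.lt_or_eq with h1 | h1
      · exact h1
      · exfalso; rw [← h1] at hξ; norm_num at hξ; linarith
    have htL : 0 < t * L := mul_pos ht hLpos
    have hRpos : 0 < R := by linarith
    have hiInf : (⨅ i, altitude p i) = t * ((k:ℝ) * L) := by
      have h1 : t = (⨅ i, altitude p i) / ((k:ℝ) * L) := by
        rw [htdef, thickness, if_neg hk]
      rw [h1, div_mul_cancel₀]
      exact mul_ne_zero (by exact_mod_cast hk) hLpos.ne'
    have halt : ∀ i : Fin k, t * ((k:ℝ) * L) ≤ altitude p i.succ := fun i =>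
      hiInf ▸ ciInf_le ((Set.finite_range _).bddBelow) i.succ
    have ht1 : t ≤ 1 := by
      have i0 : Fin k := ⟨0, Nat.pos_of_ne_zero hk⟩
      have h1 : altitude p i0.succ ≤ dist (p i0.succ) (p 0) :=
        Metric.infDist_le_dist_of_mem
          (mem_affineSpan ℝ ⟨0, Ne.symm (Fin.succ_ne_zero _), rfl⟩)
      have h2 := hLd i0.succ 0
      have h3 := halt i0
      have e1 : t*L ≤ t*((k:ℝ)*L) :=
        mul_le_mul_of_nonneg_left (le_mul_of_one_le_left hL0 hk1) (le_of_lt ht)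
      have e2 : t*L ≤ L := le_trans e1 (le_trans h3 (le_trans h1 h2))
      exact (mul_le_iff_le_one_left hLpos).mp e2
    have hξ16 : 16 * ξ₀ ≤ t^2 := by
      have : (t/4)^2 = t^2/16 := by ring
      rw [this] at hξ
      linarith
    have hξ116 : ξ₀ ≤ 1/16 := by
      have hsq1 : t^2 ≤ 1 := by nlinarith [ht1, ht0]
      linarith
    -- coefficient bounds
    have hRnorm : ‖c - p 0‖ = R := by rw [← dist_eq_norm]; exact hR 0
    set u := ∑ j, (mu j - lam j) • (p j.succ - p 0) with hu
    set U := ‖u‖ with hU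
    set Sl := ∑ i, |lam i| with hSl
    set Sm := ∑ i, |mu i| with hSm
    set Sd := ∑ i, |mu i - lam i| with hSd
    have hU0 : 0 ≤ U := norm_nonneg _
    have hSl0 : 0 ≤ Sl := Finset.sum_nonneg fun i _ => abs_nonneg _
    have hSm0 : 0 ≤ Sm := Finset.sum_nonneg fun i _ => abs_nonneg _
    have hSd0 : 0 ≤ Sd := Finset.sum_nonneg fun i _ => abs_nonneg _
    have hcoord : ∀ (a : Fin k → ℝ) (i : Fin k),
        |a i| * (t * ((k:ℝ) * L)) ≤ ‖∑ j, a j • (p j.succ - p 0)‖ := by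
      intro a i
      calc |a i| * (t * ((k:ℝ) * L)) ≤ |a i| * altitude p i.succ :=
            mul_le_mul_of_nonneg_left (halt i) (abs_nonneg _)
        _ ≤ _ := alt_le p a i
    have hsum_bound : ∀ (a : Fin k → ℝ),
        (∑ i, |a i|) * (t * L) ≤ ‖∑ j, a j • (p j.succ - p 0)‖ := by
      intro a
      have h1 : ∑ i, (|a i| * (t * ((k:ℝ) * L))) ≤
          ∑ _i : Fin k, ‖∑ j, a j • (p j.succ - p 0)‖ :=
        Finset.sum_le_sum fun i _ => hcoord a i
      rw [← Finset.sum_mul, Finset.sum_const, Finset.card_univ, Fintype.card_fin,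
        nsmul_eq_mul] at h1
      have hkpos : (0:ℝ) < (k:ℝ) := by linarith
      have h2 : ((∑ i, |a i|) * (t * L)) * (k:ℝ) ≤
          ‖∑ j, a j • (p j.succ - p 0)‖ * (k:ℝ) := by
        calc ((∑ i, |a i|) * (t * L)) * (k:ℝ)
            = (∑ i, |a i|) * (t * ((k:ℝ) * L)) := by ring
          _ ≤ (k:ℝ) * ‖∑ j, a j • (p j.succ - p 0)‖ := h1
          _ = ‖∑ j, a j • (p j.succ - p 0)‖ * (k:ℝ) := by ring
      exact le_of_mul_le_mul_right h2 hkpos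
    have hSl' : Sl * (t * L) ≤ R := by
      have h1 := hsum_bound lam
      rw [← hlam, hRnorm] at h1
      rw [hSl]
      exact h1
    have hSd' : Sd * (t * L) ≤ U := by
      have h1 := hsum_bound (fun j => mu j - lam j)
      rw [hSd, hU, hu]
      simpa using h1
    clear_value t L D u U Sl Sm Sd
    -- inner products with u
    have hviu : ∀ i : Fin k, |⟪p i.succ - p 0, u⟫| ≤ 3/4*D + 3/2*D*Sm := by
      intro i
      have e0 : ⟪p i.succ - p 0, u⟫ = ∑ j, (mu j - lam j) * ⟪p i.succ - p 0, p j.succ - p 0⟫ := by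
        rw [hu, inner_sum]
        exact Finset.sum_congr rfl fun j _ => by rw [real_inner_smul_right]
      have e1 : ∑ j, (mu j - lam j) * ⟪p i.succ - p 0, p j.succ - p 0⟫ =
          (∑ j, mu j * (⟪p i.succ - p 0, p j.succ - p 0⟫ - ⟪q i.succ - q 0, q j.succ - q 0⟫))
          + ((∑ j, mu j * ⟪q i.succ - q 0, q j.succ - q 0⟫)
             - ∑ j, lam j * ⟪p i.succ - p 0, p j.succ - p 0⟫) := by
        rw [← Finset.sum_sub_distrib, ← Finset.sum_add_distrib]
        exact Finset.sum_congr rfl fun j _ => by ring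
      rw [e0, e1, hmuEq i, hlamEq i]
      have hstep : |∑ j, mu j * (⟪p i.succ - p 0, p j.succ - p 0⟫ -
          ⟪q i.succ - q 0, q j.succ - q 0⟫)| ≤ 3/2*D*Sm := by
        calc |∑ j, mu j * (⟪p i.succ - p 0, p j.succ - p 0⟫ - ⟪q i.succ - q 0, q j.succ - q 0⟫)|
            ≤ ∑ j, |mu j * (⟪p i.succ - p 0, p j.succ - p 0⟫ - ⟪q i.succ - q 0, q j.succ - q 0⟫)| :=
              Finset.abs_sum_le_sum_abs _ _
          _ ≤ ∑ j, |mu j| * (3/2*D) := by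
              refine Finset.sum_le_sum fun j _ => ?_
              rw [abs_mul]
              exact mul_le_mul_of_nonneg_left (hgram i j) (abs_nonneg _)
          _ = 3/2*D*Sm := by rw [← Finset.sum_mul, hSm]; ring
      have hstep2 : |‖q i.succ - q 0‖^2/2 - ‖p i.succ - p 0‖^2/2| ≤ 3/4*D := by
        have := hbdiff i
        rw [abs_sub_comm] at this
        rw [abs_le] at this ⊢
        constructor <;> [linarith; linarith]
      calc |_ + (‖q i.succ - q 0‖^2/2 - ‖p i.succ - p 0‖^2/2)| ≤ _ + _ := abs_add_le _ _
        _ ≤ 3/2*D*Sm + 3/4*D := add_le_add hstep hstep2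
        _ = 3/4*D + 3/2*D*Sm := by ring
    have hU2 : U^2 ≤ Sd * (3/4*D + 3/2*D*Sm) := by
      have e0 : U^2 = ∑ j, (mu j - lam j) * ⟪p j.succ - p 0, u⟫ := by
        rw [hU, ← real_inner_self_eq_norm_sq]
        nth_rewrite 1 [hu]
        rw [sum_inner]
        exact Finset.sum_congr rfl fun j _ => by rw [real_inner_smul_left]
      rw [e0]
      calc ∑ j, (mu j - lam j) * ⟪p j.succ - p 0, u⟫
          ≤ ∑ j, |mu j - lam j| * (3/4*D + 3/2*D*Sm) := by
            refine Finset.sum_le_sum fun j _ => ?_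
            calc (mu j - lam j) * ⟪p j.succ - p 0, u⟫
                ≤ |(mu j - lam j) * ⟪p j.succ - p 0, u⟫| := le_abs_self _
              _ = |mu j - lam j| * |⟪p j.succ - p 0, u⟫| := abs_mul _ _
              _ ≤ |mu j - lam j| * (3/4*D + 3/2*D*Sm) :=
                  mul_le_mul_of_nonneg_left (hviu j) (abs_nonneg _)
        _ = Sd * (3/4*D + 3/2*D*Sm) := by rw [← Finset.sum_mul, hSd]
    have hB0 : 0 ≤ 3/4*D + 3/2*D*Sm := by
      have := mul_nonneg hD0 hSm0
      linarith
    have hUtL : U * (t*L) ≤ 3/4*D + 3/2*D*Sm := by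
      rcases hU0.lt_or_eq with hUpos | hUz
      · have c1 : U^2*(t*L) ≤ (Sd*(3/4*D + 3/2*D*Sm))*(t*L) :=
          mul_le_mul_of_nonneg_right hU2 (le_of_lt htL)
        have c2 : (Sd*(t*L))*(3/4*D + 3/2*D*Sm) ≤ U*(3/4*D + 3/2*D*Sm) :=
          mul_le_mul_of_nonneg_right hSd' hB0
        have c3 : U*(U*(t*L)) ≤ U*(3/4*D + 3/2*D*Sm) := by
          calc U*(U*(t*L)) = U^2*(t*L) := by ring
            _ ≤ (Sd*(3/4*D + 3/2*D*Sm))*(t*L) := c1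
            _ = (Sd*(t*L))*(3/4*D + 3/2*D*Sm) := by ring
            _ ≤ U*(3/4*D + 3/2*D*Sm) := c2
        exact le_of_mul_le_mul_left c3 hUpos
      · rw [← hUz, zero_mul]; exact hB0
    have hSmb : Sm ≤ Sl + Sd := by
      rw [hSm, hSl, hSd, ← Finset.sum_add_distrib]
      exact Finset.sum_le_sum fun i _ => by
        have := abs_sub_abs_le_abs_sub (mu i) (lam i)
        have h2 := abs_nonneg (lam i)
        linarith [abs_sub_abs_le_abs_sub (mu i) (lam i)]
    -- numeric facts about D
    have hD1 : D ≤ (33/16)*ξ₀*L^2 := by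
      rw [hD]
      nlinarith [mul_le_mul_of_nonneg_right hξ116 (mul_nonneg hξ0 (sq_nonneg L))]
    have hD2 : 256*D ≤ 33*(t*L)^2 := by
      have e : (t*L)^2 = t^2*L^2 := by ring
      rw [e]
      have h1 : 16*ξ₀*L^2 ≤ t^2*L^2 := by
        have := mul_le_mul_of_nonneg_right hξ16 (sq_nonneg L)
        linarith
      linarith [hD1, h1]
    have htL2R : t*L ≤ 2*R := by
      have := mul_le_mul_of_nonneg_right ht1 hL0
      linarith [hL2R]
    -- key chain
    have hSmtL : Sm * (t*L) ≤ R + U := by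
      have h1 := mul_le_mul_of_nonneg_right hSmb (le_of_lt htL)
      have h2 : (Sl + Sd) * (t*L) = Sl*(t*L) + Sd*(t*L) := by ring
      linarith [hSl', hSd']
    have hS4 : U * (t*L)^2 ≤ 4*D*R := by
      have s1 : U * (t*L)^2 ≤ (3/4*D + 3/2*D*Sm) * (t*L) := by
        have := mul_le_mul_of_nonneg_right hUtL (le_of_lt htL)
        calc U * (t*L)^2 = (U*(t*L))*(t*L) := by ring
          _ ≤ _ := this
      have s2 : (3/4*D + 3/2*D*Sm) * (t*L) = 3/4*D*(t*L) + 3/2*D*(Sm*(t*L)) := by ring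
      have s3a : 3/4*D*(t*L) ≤ 3/4*D*(2*R) :=
        mul_le_mul_of_nonneg_left htL2R (by linarith [hD0])
      have s3b : 3/2*D*(Sm*(t*L)) ≤ 3/2*D*(R + U) :=
        mul_le_mul_of_nonneg_left hSmtL (by linarith [hD0])
      have s3 : U * (t*L)^2 ≤ 3/4*D*(2*R) + 3/2*D*(R + U) := by
        rw [s2] at s1
        linarith
      have s5 : 3/2*D*U ≤ (99/512)*((t*L)^2*U) := by
        have := mul_le_mul_of_nonneg_right hD2 hU0
        linarith
      linarith [s3, s5, mul_nonneg hD0 hR0]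
    have hS5 : Sm * (t*L) ≤ (97/64)*R := by
      have s1 : Sm * (t*L) * (t*L)^2 ≤ R*(t*L)^2 + 4*D*R := by
        have h1 := mul_le_mul_of_nonneg_right hSmtL (sq_nonneg (t*L))
        have h2 : (R + U)*(t*L)^2 = R*(t*L)^2 + U*(t*L)^2 := by ring
        linarith [hS4]
      have s2 : 4*D*R ≤ (33/64)*((t*L)^2*R) := by
        have := mul_le_mul_of_nonneg_right hD2 hR0
        linarith
      have s3 : Sm * (t*L) * (t*L)^2 ≤ (97/64)*R*(t*L)^2 := by linarith [s1, s2]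
      have hq2 : 0 < (t*L)^2 := by positivity
      exact le_of_mul_le_mul_right s3 hq2
    -- the main identity
    have hcv : ∀ j : Fin k, ⟪p j.succ - p 0, c - p 0⟫ = ‖p j.succ - p 0‖^2/2 := by
      intro j
      rw [hlam, inner_sum, ← hlamEq j]
      exact Finset.sum_congr rfl fun i _ => by rw [real_inner_smul_right]
    have hucp : ⟪u, c - p 0⟫ = ∑ j, (mu j - lam j) * (‖p j.succ - p 0‖^2/2) := by
      rw [hu, sum_inner]
      exact Finset.sum_congr rfl fun j _ => by rw [real_inner_smul_left, hcv j]
    have hident : R'^2 - R^2 =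
        (∑ j, mu j * (‖q j.succ - q 0‖^2 - ‖p j.succ - p 0‖^2))/2 + ⟪u, c - p 0⟫ := by
      rw [hucp, hmuR, hlamR]
      rw [div_sub_div_same, ← Finset.sum_sub_distrib]
      rw [show (∑ j, (mu j - lam j) * (‖p j.succ - p 0‖^2/2)) =
        (∑ j, (mu j - lam j) * ‖p j.succ - p 0‖^2)/2 from by
          rw [Finset.sum_div]; exact Finset.sum_congr rfl fun j _ => by ring]
      rw [← add_div, ← Finset.sum_add_distrib]
      congr 1
      exact Finset.sum_congr rfl fun j _ => by ring
    have habs : |R'^2 - R^2| ≤ 3/4*D*Sm + U*R := by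
      rw [hident]
      have p1 : |(∑ j, mu j * (‖q j.succ - q 0‖^2 - ‖p j.succ - p 0‖^2))/2| ≤ 3/4*D*Sm := by
        rw [abs_div]
        have : |∑ j, mu j * (‖q j.succ - q 0‖^2 - ‖p j.succ - p 0‖^2)| ≤ 3/2*D*Sm := by
          calc |∑ j, mu j * (‖q j.succ - q 0‖^2 - ‖p j.succ - p 0‖^2)|
              ≤ ∑ j, |mu j * (‖q j.succ - q 0‖^2 - ‖p j.succ - p 0‖^2)| :=
                Finset.abs_sum_le_sum_abs _ _
            _ ≤ ∑ j, |mu j| * (3/2*D) := by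
                refine Finset.sum_le_sum fun j _ => ?_
                rw [abs_mul]
                refine mul_le_mul_of_nonneg_left ?_ (abs_nonneg _)
                rw [abs_sub_comm]
                exact hbdiff j
            _ = 3/2*D*Sm := by rw [← Finset.sum_mul, hSm]; ring
        rw [show |(2:ℝ)| = 2 from by norm_num]
        linarith
      have p2 : |⟪u, c - p 0⟫| ≤ U*R := by
        have h3 := abs_real_inner_le_norm u (c - p 0)
        rw [hRnorm] at h3
        rw [hU]
        exact h3
      calc |_ + _| ≤ _ + _ := abs_add_le _ _
        _ ≤ 3/4*D*Sm + U*R := add_le_add p1 p2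
    -- finish
    have hfin1 : |R' - R| * R ≤ |R'^2 - R^2| := by
      have e : R'^2 - R^2 = (R' - R) * (R' + R) := by ring
      rw [e, abs_mul, abs_of_nonneg (by linarith : (0:ℝ) ≤ R' + R)]
      exact mul_le_mul_of_nonneg_left (by linarith) (abs_nonneg _)
    have hfin2 : |R' - R| * R * (t*L)^2 ≤ 13*ξ₀*L^2*R^2 := by
      have s1 : |R' - R| * R * (t*L)^2 ≤ (3/4*D*Sm + U*R)*(t*L)^2 :=
        mul_le_mul_of_nonneg_right (le_trans hfin1 habs) (sq_nonneg (t*L))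
      have s2 : (3/4*D*Sm + U*R)*(t*L)^2 = 3/4*D*(Sm*(t*L))*(t*L) + (U*(t*L)^2)*R := by ring
      have s3 : 3/4*D*(Sm*(t*L))*(t*L) ≤ 3/4*D*((97/64)*R)*(2*R) := by
        have a1 : 3/4*D*(Sm*(t*L)) ≤ 3/4*D*((97/64)*R) :=
          mul_le_mul_of_nonneg_left hS5 (by linarith [hD0])
        have a2 : 0 ≤ 3/4*D*((97/64)*R) := by
          have := mul_nonneg hD0 hR0
          linarith
        exact mul_le_mul a1 htL2R (le_of_lt htL) a2
      have s4 : (U*(t*L)^2)*R ≤ 4*D*R*R := mul_le_mul_of_nonneg_right hS4 hR0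
      have s6 : 3/4*D*((97/64)*R)*(2*R) + 4*D*R*R ≤ 13*ξ₀*L^2*R^2 := by
        have a1 : D*R^2 ≤ 33/16*ξ₀*L^2*R^2 := by
          have := mul_le_mul_of_nonneg_right hD1 (sq_nonneg R)
          linarith
        have a2 : 0 ≤ D*R^2 := mul_nonneg hD0 (sq_nonneg R)
        linarith [a1, a2]
      linarith [s1, s2, s3, s4, s6]
    have hfin3 : |R' - R| * t^2 ≤ 13*ξ₀*R := by
      have e : |R' - R| * R * (t*L)^2 = (|R' - R| * t^2) * (R * L^2) := by ring
      rw [e] at hfin2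
      have e2 : 13*ξ₀*L^2*R^2 = (13*ξ₀*R) * (R * L^2) := by ring
      rw [e2] at hfin2
      have hpos : 0 < R * L^2 := by positivity
      exact le_of_mul_le_mul_right hfin2 hpos
    have hsqrtk : 1 ≤ Real.sqrt ((k:ℝ)^3) := by
      rw [Real.one_le_sqrt]
      calc (1:ℝ) = 1^3 := by norm_num
        _ ≤ (k:ℝ)^3 := pow_le_pow_left₀ (by norm_num) hk1 3
    have htcube : 0 < t^3 := pow_pos ht 3
    rw [le_div_iff₀ htcube]
    have h1 : |R' - R| * t^3 ≤ |R' - R| * t^2 :=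
      mul_le_mul_of_nonneg_left (pow_le_pow_of_le_one ht0 ht1 (by norm_num)) (abs_nonneg _)
    have h2 : 13*ξ₀*R ≤ 16 * Real.sqrt ((k:ℝ)^3) * R * ξ₀ := by
      have a1 := mul_le_mul_of_nonneg_right hsqrtk (mul_nonneg hξ0 hR0)
      have a2 : 0 ≤ ξ₀*R := mul_nonneg hξ0 hR0
      linarith [a1, a2]
    linarith [hfin3, h1, h2]
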